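/- Strongly monotone mirror prox linear convergence: suppose g is λ-relatively Lipschitz and m-strongly monotone with respect to r (⟨g(w)-g(z), w-z⟩ ≥ m(V_w(z)+V_z(w))), and z* solves the variational inequality (⟨g(z*), z* - z⟩ ≤ 0 for all z). Define iterates w_t = Prox_{z_t}((1/λ)g(z_t)) and z_{t+1} = argmin_z {⟨(1/λ)g(w_t), z⟩ + V_{z_t}(z) + (m/λ)V_{w_t}(z)}. Then V_{z_T}(z*) ≤ (1 + m/λ)^{-T} V_{z₀}(z*). -/

import Mathlib

open scoped RealInnerProductSpace

/-- Convexity + gradient gives the first-order lower bound, hence Bregman nonnegativity. -/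
lemma bregman_aux_nonneg {E : Type*} [NormedAddCommGroup E]
    [InnerProductSpace ℝ E] [CompleteSpace E]
    (r : E → ℝ) (r' : E → E)
    (hdiff : ∀ x, HasGradientAt r (r' x) x)
    (hconv : ConvexOn ℝ Set.univ r) (x y : E) :
    ⟪r' x, y - x⟫ ≤ r y - r x := by
  set f : ℝ → ℝ := fun t => r (x + t • (y - x)) with hf
  have hfc : ConvexOn ℝ Set.univ f := by
    have := hconv.comp_affineMap (AffineMap.lineMap x y : ℝ →ᵃ[ℝ] E)
    have heq : (r ∘ (AffineMap.lineMap x y : ℝ →ᵃ[ℝ] E)) = f := by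
      funext t
      simp [hf, AffineMap.lineMap_apply, add_comm]
    rw [heq] at this
    simpa using this
  have hline : HasDerivAt (fun t : ℝ => x + t • (y - x)) (y - x) 0 := by
    simpa using ((hasDerivAt_id (0 : ℝ)).smul_const (y - x)).const_add x
  have hF := (hdiff x).hasFDerivAt
  have hx0 : x + (0 : ℝ) • (y - x) = x := by simp
  have hfd : HasDerivAt f (⟪r' x, y - x⟫) 0 := by
    have hF' : HasFDerivAt r ((InnerProductSpace.toDual ℝ E) (r' x))
        ((fun t : ℝ => x + t • (y - x)) 0) := by simpa [hx0] using hF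
    have := hF'.comp_hasDerivAt (0 : ℝ) hline
    exact this
  have := hfc.le_slope_of_hasDerivAt (Set.mem_univ (0 : ℝ)) (Set.mem_univ (1 : ℝ))
    one_pos hfd
  have hs : slope f 0 1 = r y - r x := by
    simp [slope_def_field, hf]
  linarith [this, hs ▸ this]

/-- Strongly monotone mirror prox (Proposition 4): if `g` is `λ`-relatively Lipschitz and
`m`-strongly monotone with respect to `r`, `z*` solves the VI in `g`, and the iterates satisfy
the first-order optimality inequalities of the strongly monotone mirror prox steps, then
`V_{z_T}(z*) ≤ (1 + m/λ)^{-T} V_{z₀}(z*)`. -/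
theorem strongly_monotone_mirror_prox {E : Type*} [NormedAddCommGroup E]
    [InnerProductSpace ℝ E] [CompleteSpace E]
    (r : E → ℝ) (r' : E → E)
    (hdiff : ∀ x, HasGradientAt r (r' x) x)
    (hconv : ConvexOn ℝ Set.univ r)
    (V : E → E → ℝ)
    (hV : ∀ x y, V x y = r y - r x - ⟪r' x, y - x⟫)
    (g : E → E) (lam m : ℝ) (hlam : 0 < lam) (hm : 0 < m)
    (hrel : ∀ z w u, ⟪g w - g z, w - u⟫ ≤ lam * (V z w + V w u))
    (hmono : ∀ w z, m * (V w z + V z w) ≤ ⟪g w - g z, w - z⟫)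
    (zs : E) (hvi : ∀ z, ⟪g zs, zs - z⟫ ≤ 0)
    (z w : ℕ → E)
    (hw : ∀ t u, ⟪(1 / lam) • g (z t), w t - u⟫ ≤ V (z t) u - V (w t) u - V (z t) (w t))
    (hz : ∀ t u, ⟪(1 / lam) • g (w t), z (t + 1) - u⟫ ≤
      V (z t) u - V (z (t + 1)) u - V (z t) (z (t + 1)) +
        (m / lam) * (V (w t) u - V (z (t + 1)) u))
    (T : ℕ) :
    V (z T) zs ≤ (1 + m / lam)⁻¹ ^ T * V (z 0) zs := by
  have hVnn : ∀ x y, 0 ≤ V x y := by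
    intro x y
    have := bregman_aux_nonneg r r' hdiff hconv x y
    rw [hV]; linarith
  -- one-step contraction (cleared denominators)
  have key : ∀ t, (lam + m) * V (z (t + 1)) zs ≤ lam * V (z t) zs := by
    intro t
    -- h1 : inner g(w t) (z(t+1) - zs) ≤ lam * (...)
    have h1 := hz t zs
    rw [real_inner_smul_left, one_div] at h1
    replace h1 := mul_le_mul_of_nonneg_left h1 hlam.le
    rw [← mul_assoc, mul_inv_cancel₀ hlam.ne', one_mul] at h1
    have h1' : ⟪g (w t), z (t + 1) - zs⟫ ≤
        lam * (V (z t) zs - V (z (t + 1)) zs - V (z t) (z (t + 1))) +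
          m * (V (w t) zs - V (z (t + 1)) zs) := by
      calc ⟪g (w t), z (t + 1) - zs⟫ ≤ _ := h1
        _ = lam * (V (z t) zs - V (z (t + 1)) zs - V (z t) (z (t + 1))) +
            m * (V (w t) zs - V (z (t + 1)) zs) := by
          field_simp
    have h2 := hw t (z (t + 1))
    rw [real_inner_smul_left, one_div] at h2
    replace h2 := mul_le_mul_of_nonneg_left h2 hlam.le
    rw [← mul_assoc, mul_inv_cancel₀ hlam.ne', one_mul] at h2
    have h3 := hrel (z t) (w t) (z (t + 1))
    have h4 := hmono (w t) zs
    have h5 := hvi (w t)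
    have hs : ⟪g zs, w t - zs⟫ = -⟪g zs, zs - w t⟫ := by
      rw [← neg_sub (zs) (w t), inner_neg_right]
    have hid : ⟪g (w t), z (t + 1) - zs⟫ + ⟪g (z t), w t - z (t + 1)⟫ +
        ⟪g (w t) - g (z t), w t - z (t + 1)⟫ =
        ⟪g (w t) - g zs, w t - zs⟫ + ⟪g zs, w t - zs⟫ := by
      simp only [inner_sub_left, inner_sub_right]
      ring
    have hnn := hVnn zs (w t)
    nlinarith [h1', h2, h3, h4, h5, hs, hid, hnn]
  have hc : (1 + m / lam)⁻¹ = lam / (lam + m) := by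
    rw [show (1 + m / lam) = (lam + m) / lam by field_simp, inv_div]
  have hlm : 0 < lam + m := by linarith
  have step : ∀ t, V (z (t + 1)) zs ≤ (1 + m / lam)⁻¹ * V (z t) zs := by
    intro t
    rw [hc, div_mul_eq_mul_div, le_div_iff₀ hlm]
    have := key t
    linarith [this]
  induction T with
  | zero => simp
  | succ n ih =>
    calc V (z (n + 1)) zs ≤ (1 + m / lam)⁻¹ * V (z n) zs := step n
      _ ≤ (1 + m / lam)⁻¹ * ((1 + m / lam)⁻¹ ^ n * V (z 0) zs) := by
        apply mul_le_mul_of_nonneg_left ih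
        rw [hc]
        positivity
      _ = (1 + m / lam)⁻¹ ^ (n + 1) * V (z 0) zs := by ring
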